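/- Every connected compact metric n-manifold without boundary is homogeneous: for any two points x, y there is a homeomorphism of the space onto itself taking x to y. -/

import Mathlib

open Metric Set NNReal

/-- A space is homogeneous if for any two points there is a self-homeomorphism
taking one to the other. -/
def Homogeneous (X : Type*) [TopologicalSpace X] : Prop :=
  ∀ x y : X, ∃ h : X ≃ₜ X, h x = y

/-- `X` is an `n`-manifold (without boundary): each point has an open neighborhood
homeomorphic to Euclidean `n`-space. -/
def IsNManifold (X : Type*) [TopologicalSpace X] (n : ℕ) : Prop :=
  ∀ x : X, ∃ U : Set X, x ∈ U ∧ IsOpen U ∧ Nonempty (U ≃ₜ EuclideanSpace ℝ (Fin n))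

lemma exists_push_homeo {E : Type*} [NormedAddCommGroup E] [NormedSpace ℝ E]
    [CompleteSpace E] (a : E) (ha : ‖a‖ < 1) :
    ∃ h : E ≃ₜ E, h 0 = a ∧ ∀ x : E, 1 ≤ ‖x‖ → h x = x := by
  set f : E → ℝ := fun x => max (1 - ‖x‖) 0 with hf
  have hflip : LipschitzWith 1 f := by
    apply LipschitzWith.of_dist_le_mul
    intro x y
    rw [Real.dist_eq, NNReal.coe_one, one_mul]
    calc |f x - f y| ≤ |(1 - ‖x‖) - (1 - ‖y‖)| := abs_max_sub_max_le_abs _ _ _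
      _ = |‖y‖ - ‖x‖| := by ring_nf
      _ ≤ ‖y - x‖ := abs_norm_sub_norm_le y x
      _ = dist x y := by rw [dist_eq_norm, norm_sub_rev]
  set g : E → E := fun x => f x • a with hg
  have hglip : LipschitzWith ‖a‖₊ g := by
    apply LipschitzWith.of_dist_le_mul
    intro x y
    have h1 : dist (g x) (g y) = dist (f x) (f y) * ‖a‖ := by
      simp [g, dist_eq_norm, ← sub_smul, norm_smul, abs_sub_comm]
    have h2 : dist (f x) (f y) ≤ dist x y := by simpa using hflip.dist_le_mul x y
    rw [h1]
    calc dist (f x) (f y) * ‖a‖ ≤ dist x y * ‖a‖ :=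
          mul_le_mul_of_nonneg_right h2 (norm_nonneg a)
      _ = ‖a‖₊ * dist x y := by rw [coe_nnnorm]; ring
  have hKlt : ‖a‖₊ < 1 := by
    rwa [← NNReal.coe_lt_coe, coe_nnnorm, NNReal.coe_one]
  set h : E → E := fun x => x + g x with hh
  have hcont : Continuous h := continuous_id.add hglip.continuous
  have hcontr : ∀ y : E, ContractingWith ‖a‖₊ (fun x => y - g x) := by
    intro y
    refine ⟨hKlt, LipschitzWith.of_dist_le_mul fun x x' => ?_⟩
    have h3 : dist (y - g x) (y - g x') = dist (g x) (g x') := by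
      simp [dist_eq_norm, sub_sub_sub_cancel_left, norm_sub_rev]
    rw [h3]
    exact hglip.dist_le_mul x x'
  set inv : E → E := fun y => ContractingWith.fixedPoint (fun x => y - g x) (hcontr y) with hinv
  have hinvfix : ∀ y : E, inv y = y - g (inv y) := fun y =>
    ((hcontr y).fixedPoint_isFixedPt).symm
  have hright : Function.RightInverse inv h := by
    intro y
    show inv y + g (inv y) = y
    exact eq_sub_iff_add_eq.mp (hinvfix y)
  have hleft : Function.LeftInverse inv h := by
    intro x
    have hx : Function.IsFixedPt (fun z => h x - g z) x := by
      show h x - g x = x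
      simp [hh]
    exact ((hcontr (h x)).fixedPoint_unique hx).symm
  have hanti : AntilipschitzWith (1⁻¹ - ‖a‖₊)⁻¹ h :=
    (AntilipschitzWith.id (α := E)).add_lipschitzWith hglip (by simpa using hKlt)
  have hinvlip : LipschitzWith (1⁻¹ - ‖a‖₊)⁻¹ inv := hanti.to_rightInverse hright
  refine ⟨⟨⟨h, inv, hleft, hright⟩, hcont, hinvlip.continuous⟩, ?_, ?_⟩
  · show h 0 = a
    simp [hh, hg, hf]
  · intro x hx
    show h x = x
    have hfx : f x = 0 := max_eq_right (by linarith)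
    simp [hh, hg, hfx]

/-- Extend a homeomorphism of a chart which is the identity outside the closed unit
ball to a homeomorphism of the whole space. -/
lemma exists_reach_homeo {X : Type*} [TopologicalSpace X] [T2Space X] {n : ℕ}
    {U : Set X} (hUo : IsOpen U) (φ : U ≃ₜ EuclideanSpace ℝ (Fin n))
    (x y : U) (hxy : ‖φ y - φ x‖ < 1) : ∃ H : X ≃ₜ X, H x = y := by
  classical
  set E := EuclideanSpace ℝ (Fin n)
  -- recenter the chart at x
  set ψ : U ≃ₜ E := φ.trans (Homeomorph.addRight (-(φ x))) with hψ
  have hψx : ψ x = 0 := by simp [hψ]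
  have hψy : ψ y = φ y - φ x := by simp [hψ, sub_eq_add_neg]
  obtain ⟨h, h0, hsupp⟩ := exists_push_homeo (φ y - φ x) hxy
  have hsupp' : ∀ v : E, 1 ≤ ‖v‖ → h.symm v = v := by
    intro v hv
    conv_lhs => rw [← hsupp v hv]
    exact h.symm_apply_apply v
  -- the compact support in X
  set K : Set X := Subtype.val '' (ψ ⁻¹' Metric.closedBall (0 : E) 1) with hK
  have hKU : K ⊆ U := by rintro z ⟨w, _, rfl⟩; exact w.2
  have hKc : IsCompact K := by
    have h1 : IsCompact (Metric.closedBall (0 : E) 1) := isCompact_closedBall 0 1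
    have h2 : IsCompact (ψ.symm '' Metric.closedBall (0 : E) 1) :=
      h1.image ψ.symm.continuous
    have h3 : ψ ⁻¹' Metric.closedBall (0 : E) 1 = ψ.symm '' Metric.closedBall (0 : E) 1 := by
      ext w
      simp only [Set.mem_preimage, Metric.mem_closedBall, dist_zero_right, Set.mem_image]
      constructor
      · intro hw
        exact ⟨ψ w, by simpa using hw, ψ.symm_apply_apply w⟩
      · rintro ⟨v, hv, rfl⟩
        simpa using hv
    rw [hK, h3]
    exact h2.image continuous_subtype_val
  have hKcl : IsClosed K := hKc.isClosed
  -- the extension construction, for an arbitrary chart homeo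
  let F : (E ≃ₜ E) → X → X := fun e z =>
    if hz : z ∈ U then (ψ.symm (e (ψ ⟨z, hz⟩)) : X) else z
  have hFmem : ∀ (e : E ≃ₜ E) (z : X) (hz : z ∈ U), F e z ∈ U := by
    intro e z hz
    simp only [F, dif_pos hz]
    exact (ψ.symm (e (ψ ⟨z, hz⟩))).2
  have hFinv : ∀ (e : E ≃ₜ E) (z : X), F e.symm (F e z) = z := by
    intro e z
    by_cases hz : z ∈ U
    · have hm : F e z ∈ U := hFmem e z hz
      have hval : (⟨F e z, hm⟩ : U) = ψ.symm (e (ψ ⟨z, hz⟩)) := by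
        apply Subtype.ext
        simp only [F, dif_pos hz]
      simp only [F, dif_pos hm, hval]
      simp [hz]
    · have : F e z = z := dif_neg hz
      rw [this]
      exact dif_neg hz
  have hFid : ∀ (e : E ≃ₜ E), (∀ v : E, 1 ≤ ‖v‖ → e v = v) → ∀ z ∈ Kᶜ, F e z = z := by
    intro e he z hz
    by_cases hzU : z ∈ U
    · have hball : ψ ⟨z, hzU⟩ ∉ Metric.closedBall (0 : E) 1 := by
        intro hmem
        exact hz ⟨⟨z, hzU⟩, hmem, rfl⟩
      have hnorm : 1 ≤ ‖ψ ⟨z, hzU⟩‖ := by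
        by_contra hlt
        push_neg at hlt
        exact hball (by simpa [Metric.mem_closedBall, dist_eq_norm] using hlt.le)
      simp only [F, dif_pos hzU, he _ hnorm]
      simp
    · exact dif_neg hzU
  have hFcont : ∀ (e : E ≃ₜ E), (∀ v : E, 1 ≤ ‖v‖ → e v = v) → Continuous (F e) := by
    intro e he
    rw [continuous_iff_continuousAt]
    intro z
    by_cases hz : z ∈ U
    · have hcU : ContinuousOn (F e) U := by
        rw [continuousOn_iff_continuous_restrict]
        have : U.domRestrict (F e) = fun u : U => (ψ.symm (e (ψ u)) : X) := by
          funext u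
          simp only [Set.domRestrict, F, dif_pos u.2]
        rw [this]
        exact continuous_subtype_val.comp
          (ψ.symm.continuous.comp (e.continuous.comp ψ.continuous))
      exact hcU.continuousAt (hUo.mem_nhds hz)
    · have hzK : z ∈ Kᶜ := fun hmem => hz (hKU hmem)
      have hcK : ContinuousOn (F e) Kᶜ :=
        continuousOn_id.congr (hFid e he)
      exact hcK.continuousAt (hKcl.isOpen_compl.mem_nhds hzK)
  refine ⟨⟨⟨F h, F h.symm, hFinv h, ?_⟩, hFcont h hsupp, hFcont h.symm hsupp'⟩, ?_⟩
  · intro z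
    have := hFinv h.symm z
    simpa using this
  · show F h x = y
    simp only [F, dif_pos x.2]
    have : (⟨(x : X), x.2⟩ : U) = x := rfl
    rw [this, hψx, h0, ← hψy]
    simp

/-- Every point of a manifold has an open neighborhood all of whose points can be
reached from it by a self-homeomorphism of the whole space. -/
lemma exists_reach_nbhd {X : Type*} [TopologicalSpace X] [T2Space X] {n : ℕ}
    (hX : IsNManifold X n) (z : X) :
    ∃ V : Set X, IsOpen V ∧ z ∈ V ∧ ∀ v ∈ V, ∃ g : X ≃ₜ X, g z = v := by
  obtain ⟨U, hzU, hUo, ⟨φ⟩⟩ := hX z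
  set z' : U := ⟨z, hzU⟩
  refine ⟨Subtype.val '' (φ ⁻¹' Metric.ball (φ z') 1), ?_, ?_, ?_⟩
  · exact hUo.isOpenMap_subtype_val _ (φ.continuous.isOpen_preimage _ Metric.isOpen_ball)
  · exact ⟨z', by simp, rfl⟩
  · rintro v ⟨w, hw, rfl⟩
    have hdist : ‖φ w - φ z'‖ < 1 := by
      simpa [dist_eq_norm] using hw
    exact exists_reach_homeo hUo φ z' w hdist

/-- Every connected compact metric `n`-manifold without boundary is homogeneous. -/
theorem homogeneous_of_connected_compact_manifold (X : Type*) [MetricSpace X]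
    [TopologicalSpace.SeparableSpace X] [CompactSpace X] [ConnectedSpace X]
    (n : ℕ) (hX : IsNManifold X n) : Homogeneous X := by
  intro x y
  set S : Set X := {z | ∃ h : X ≃ₜ X, h x = z} with hS
  have hxS : x ∈ S := ⟨Homeomorph.refl X, rfl⟩
  have hSo : IsOpen S := by
    rw [isOpen_iff_forall_mem_open]
    intro z hz
    obtain ⟨h₀, hh₀⟩ := hz
    obtain ⟨V, hVo, hzV, hV⟩ := exists_reach_nbhd hX z
    refine ⟨V, ?_, hVo, hzV⟩
    intro v hv
    obtain ⟨g, hg⟩ := hV v hv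
    exact ⟨h₀.trans g, by simp [hh₀, hg]⟩
  have hSco : IsOpen Sᶜ := by
    rw [isOpen_iff_forall_mem_open]
    intro z hz
    obtain ⟨V, hVo, hzV, hV⟩ := exists_reach_nbhd hX z
    refine ⟨V, ?_, hVo, hzV⟩
    intro v hv hvS
    obtain ⟨g, hg⟩ := hV v hv
    obtain ⟨h₀, hh₀⟩ := hvS
    exact hz ⟨h₀.trans g.symm, by simp [hh₀, ← hg]⟩
  have hcl : IsClosed S := by
    rw [← isOpen_compl_iff]
    exact hSco
  have huniv : S = Set.univ := IsClopen.eq_univ ⟨hcl, hSo⟩ ⟨x, hxS⟩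
  have : y ∈ S := huniv ▸ Set.mem_univ y
  exact this
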